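/- If C is a stable hyperplane code (C = code(H,X) for a stable arrangement), then for every maximal face σ of the combinatorial chamber complex cham(C) there is a unique face T ∈ Γ(C) with supp(T) = [n]\σ and link_T Γ(C) = Γ(2^σ). -/

import Mathlib

open scoped RealInnerProductSpace

def atom {n d : ℕ} (w : Fin n → EuclideanSpace ℝ (Fin d)) (h : Fin n → ℝ)
    (X : Set (EuclideanSpace ℝ (Fin d))) (σ : Finset (Fin n)) :
    Set (EuclideanSpace ℝ (Fin d)) :=
  {x ∈ X | ∀ i, i ∈ σ ↔ h i < ⟪w i, x⟫}

def StableArr {n d : ℕ} (w : Fin n → EuclideanSpace ℝ (Fin d)) (h : Fin n → ℝ)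
    (X : Set (EuclideanSpace ℝ (Fin d))) : Prop :=
  IsOpen X ∧ Convex ℝ X ∧ (∀ i, w i ≠ 0) ∧
    ∀ σ : Finset (Fin n),
      (X ∩ ⋂ i ∈ σ, {x | ⟪w i, x⟫ = h i}).Nonempty →
        LinearIndependent ℝ (fun i : σ => w i.1)

def hcode {n d : ℕ} (w : Fin n → EuclideanSpace ℝ (Fin d)) (h : Fin n → ℝ)
    (X : Set (EuclideanSpace ℝ (Fin d))) : Set (Finset (Fin n)) :=
  {σ | (atom w h X σ).Nonempty}

def polarFace {n : ℕ} (σ : Finset (Fin n)) : Finset (Fin n ⊕ Fin n) :=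
  σ.image Sum.inl ∪ σᶜ.image Sum.inr

def polar {n : ℕ} (C : Set (Finset (Fin n))) : Set (Finset (Fin n ⊕ Fin n)) :=
  {F | ∃ σ ∈ C, F ⊆ polarFace σ}

def polarOn {n : ℕ} (V : Finset (Fin n)) (C : Set (Finset (Fin n))) :
    Set (Finset (Fin n ⊕ Fin n)) :=
  {F | ∃ σ ∈ C, F ⊆ σ.image Sum.inl ∪ (V \ σ).image Sum.inr}

def link {V : Type*} [DecidableEq V] (Δ : Set (Finset V)) (T : Finset V) :
    Set (Finset V) :=
  {ν ∈ Δ | ν ∩ T = ∅ ∧ ν ∪ T ∈ Δ}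

def suppF {n : ℕ} (F : Finset (Fin n ⊕ Fin n)) : Finset (Fin n) :=
  F.image (Sum.elim id id)

def cham {n : ℕ} (C : Set (Finset (Fin n))) : Set (Finset (Fin n)) :=
  {σ | ∃ T ∈ polar C, suppF T = σᶜ ∧
    link (polar C) T = polarOn σ {τ | τ ⊆ σ}}

namespace UC
variable {n : ℕ}

lemma mem_polarFace_inl {c : Finset (Fin n)} {k : Fin n} :
    Sum.inl k ∈ polarFace c ↔ k ∈ c := by
  simp [polarFace]

lemma mem_polarFace_inr {c : Finset (Fin n)} {k : Fin n} :
    Sum.inr k ∈ polarFace c ↔ k ∉ c := by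
  simp [polarFace]

def chamberSet (σ S : Finset (Fin n)) : Finset (Fin n ⊕ Fin n) :=
  S.image Sum.inl ∪ (σᶜ \ S).image Sum.inr

lemma mem_chamberSet_inl {σ S : Finset (Fin n)} {k : Fin n} :
    Sum.inl k ∈ chamberSet σ S ↔ k ∈ S := by
  simp [chamberSet]

lemma mem_chamberSet_inr {σ S : Finset (Fin n)} {k : Fin n} :
    Sum.inr k ∈ chamberSet σ S ↔ k ∈ σᶜ \ S := by
  simp [chamberSet]

lemma suppF_chamberSet {σ S : Finset (Fin n)} (hS : S ⊆ σᶜ) :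
    suppF (chamberSet σ S) = σᶜ := by
  ext k
  simp only [suppF, Finset.mem_image]
  constructor
  · rintro ⟨t, ht, rfl⟩
    rcases t with a | a
    · have := mem_chamberSet_inl.1 ht
      simpa using hS this
    · have := (Finset.mem_sdiff.1 (mem_chamberSet_inr.1 ht)).1
      simpa using this
  · intro hk
    by_cases hkS : k ∈ S
    · exact ⟨Sum.inl k, mem_chamberSet_inl.2 hkS, rfl⟩
    · exact ⟨Sum.inr k, mem_chamberSet_inr.2 (Finset.mem_sdiff.2 ⟨hk, hkS⟩), rfl⟩

lemma chamberSet_subset_polarFace {σ S τ : Finset (Fin n)} (hS : S ⊆ σᶜ) (hτ : τ ⊆ σ) :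
    chamberSet σ S ⊆ polarFace (τ ∪ S) := by
  intro t ht
  rcases t with k | k
  · rw [mem_chamberSet_inl] at ht
    exact mem_polarFace_inl.2 (Finset.mem_union_right _ ht)
  · rw [mem_chamberSet_inr] at ht
    rcases Finset.mem_sdiff.1 ht with ⟨hk1, hk2⟩
    refine mem_polarFace_inr.2 ?_
    intro hk
    rcases Finset.mem_union.1 hk with hk | hk
    · exact (Finset.mem_compl.1 hk1) (hτ hk)
    · exact hk2 hk

lemma noDouble {C : Set (Finset (Fin n))} {F : Finset (Fin n ⊕ Fin n)}
    (hF : F ∈ polar C) {k : Fin n} (h1 : Sum.inl k ∈ F) (h2 : Sum.inr k ∈ F) : False := by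
  rcases hF with ⟨c, _, hc⟩
  exact mem_polarFace_inr.1 (hc h2) (mem_polarFace_inl.1 (hc h1))

lemma mem_polarOn_iff {σ : Finset (Fin n)} {F : Finset (Fin n ⊕ Fin n)} :
    F ∈ polarOn σ {τ | τ ⊆ σ} ↔
      (∀ k, Sum.inl k ∈ F → k ∈ σ) ∧ (∀ k, Sum.inr k ∈ F → k ∈ σ) ∧
        (∀ k, Sum.inl k ∈ F → Sum.inr k ∈ F → False) := by
  constructor
  · rintro ⟨τ, hτ, hsub⟩
    refine ⟨fun k hk => ?_, fun k hk => ?_, fun k hk1 hk2 => ?_⟩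
    · rcases Finset.mem_union.1 (hsub hk) with hk' | hk'
      · exact hτ (by simpa using hk')
      · simp at hk'
    · rcases Finset.mem_union.1 (hsub hk) with hk' | hk'
      · simp at hk'
      · exact (Finset.mem_sdiff.1 (by simpa using hk')).1
    · rcases Finset.mem_union.1 (hsub hk1) with hk' | hk'
      · have h1 : k ∈ τ := by simpa using hk'
        rcases Finset.mem_union.1 (hsub hk2) with hk'' | hk''
        · simp at hk''
        · exact (Finset.mem_sdiff.1 (by simpa using hk'')).2 h1
      · simp at hk'
  · rintro ⟨h1, h2, h3⟩
    refine ⟨{k ∈ σ | Sum.inl k ∈ F}, fun k hk => (Finset.mem_filter.1 hk).1, ?_⟩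
    intro t ht
    rcases t with k | k
    · exact Finset.mem_union_left _ (Finset.mem_image_of_mem _
        (Finset.mem_filter.2 ⟨h1 k ht, ht⟩))
    · refine Finset.mem_union_right _ (Finset.mem_image_of_mem _ (Finset.mem_sdiff.2
        ⟨h2 k ht, fun hk => h3 k (Finset.mem_filter.1 hk).2 ht⟩))

lemma link_chamberSet {C : Set (Finset (Fin n))} {σ S : Finset (Fin n)} (hS : S ⊆ σᶜ)
    (hA : ∀ τ ⊆ σ, τ ∪ S ∈ C) :
    link (polar C) (chamberSet σ S) = polarOn σ {τ | τ ⊆ σ} := by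
  ext F
  constructor
  · rintro ⟨hF, hdisj, hc⟩
    rcases hc with ⟨c, hcC, hc⟩
    have hdisj' : ∀ t ∈ F, t ∉ chamberSet σ S := by
      intro t ht ht'
      have : t ∈ F ∩ chamberSet σ S := Finset.mem_inter.2 ⟨ht, ht'⟩
      simp [hdisj] at this
    refine mem_polarOn_iff.2 ⟨fun k hk => ?_, fun k hk => ?_, fun k hk1 hk2 => ?_⟩
    · by_contra hkσ
      have hk' : k ∈ σᶜ := Finset.mem_compl.2 hkσ
      by_cases hkS : k ∈ S
      · exact hdisj' _ hk (mem_chamberSet_inl.2 hkS)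
      · have h1 : Sum.inl k ∈ F ∪ chamberSet σ S := Finset.mem_union_left _ hk
        have h2 : Sum.inr k ∈ F ∪ chamberSet σ S :=
          Finset.mem_union_right _ (mem_chamberSet_inr.2 (Finset.mem_sdiff.2 ⟨hk', hkS⟩))
        exact mem_polarFace_inr.1 (hc h2) (mem_polarFace_inl.1 (hc h1))
    · by_contra hkσ
      have hk' : k ∈ σᶜ := Finset.mem_compl.2 hkσ
      by_cases hkS : k ∈ S
      · have h1 : Sum.inl k ∈ F ∪ chamberSet σ S :=
          Finset.mem_union_right _ (mem_chamberSet_inl.2 hkS)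
        have h2 : Sum.inr k ∈ F ∪ chamberSet σ S := Finset.mem_union_left _ hk
        exact mem_polarFace_inr.1 (hc h2) (mem_polarFace_inl.1 (hc h1))
      · exact hdisj' _ hk (mem_chamberSet_inr.2 (Finset.mem_sdiff.2 ⟨hk', hkS⟩))
    · exact noDouble hF hk1 hk2
  · intro hF
    rcases hF with ⟨τ, hτ, hsub⟩
    have hτσ : τ ⊆ σ := hτ
    have hcC : τ ∪ S ∈ C := hA τ hτσ
    have hFsub : F ⊆ polarFace (τ ∪ S) := by
      intro t ht
      rcases Finset.mem_union.1 (hsub ht) with ht' | ht'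
      · rcases Finset.mem_image.1 ht' with ⟨a, ha, rfl⟩
        exact mem_polarFace_inl.2 (Finset.mem_union_left _ ha)
      · rcases Finset.mem_image.1 ht' with ⟨a, ha, rfl⟩
        rcases Finset.mem_sdiff.1 ha with ⟨ha1, ha2⟩
        refine mem_polarFace_inr.2 fun hk => ?_
        rcases Finset.mem_union.1 hk with hk | hk
        · exact ha2 hk
        · exact Finset.mem_compl.1 (hS hk) ha1
    refine ⟨⟨τ ∪ S, hcC, hFsub⟩, ?_, τ ∪ S, hcC, ?_⟩
    · rw [Finset.eq_empty_iff_forall_notMem]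
      intro t ht
      rcases Finset.mem_inter.1 ht with ⟨ht1, ht2⟩
      rcases t with k | k
      · have h1 : k ∈ S := mem_chamberSet_inl.1 ht2
        rcases Finset.mem_union.1 (hsub ht1) with ht' | ht'
        · have : k ∈ τ := by simpa using ht'
          exact Finset.mem_compl.1 (hS h1) (hτσ this)
        · simp at ht'
      · have h1 := Finset.mem_sdiff.1 (mem_chamberSet_inr.1 ht2)
        rcases Finset.mem_union.1 (hsub ht1) with ht' | ht'
        · simp at ht'
        · have : k ∈ σ \ τ := by simpa using ht'
          exact Finset.mem_compl.1 h1.1 (Finset.mem_sdiff.1 this).1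
    · exact Finset.union_subset hFsub (chamberSet_subset_polarFace hS hτσ)

lemma exists_chamberSet {C : Set (Finset (Fin n))} {σ : Finset (Fin n)}
    {T : Finset (Fin n ⊕ Fin n)} (hT : T ∈ polar C) (hsupp : suppF T = σᶜ)
    (hlink : link (polar C) T = polarOn σ {τ | τ ⊆ σ}) :
    ∃ S : Finset (Fin n), S ⊆ σᶜ ∧ T = chamberSet σ S ∧ ∀ τ ⊆ σ, τ ∪ S ∈ C := by
  classical
  set S : Finset (Fin n) := {k ∈ σᶜ | Sum.inl k ∈ T} with hSdef
  have hSsub : S ⊆ σᶜ := fun k hk => (Finset.mem_filter.1 hk).1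
  have hsuppmem : ∀ k ∈ σᶜ, Sum.inl k ∈ T ∨ Sum.inr k ∈ T := by
    intro k hk
    rw [← hsupp] at hk
    rcases Finset.mem_image.1 hk with ⟨t, ht, hkt⟩
    rcases t with a | a
    · simp only [Sum.elim_inl, id] at hkt; subst hkt; exact Or.inl ht
    · simp only [Sum.elim_inr, id] at hkt; subst hkt; exact Or.inr ht
  have hmemsupp : ∀ t ∈ T, Sum.elim id id t ∈ σᶜ := by
    intro t ht
    rw [← hsupp]
    exact Finset.mem_image_of_mem _ ht
  have hTeq : T = chamberSet σ S := by
    ext t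
    rcases t with k | k
    · rw [mem_chamberSet_inl]
      constructor
      · intro ht
        exact Finset.mem_filter.2 ⟨hmemsupp _ ht, ht⟩
      · intro hk
        exact (Finset.mem_filter.1 hk).2
    · rw [mem_chamberSet_inr]
      constructor
      · intro ht
        refine Finset.mem_sdiff.2 ⟨hmemsupp _ ht, fun hk => ?_⟩
        exact noDouble hT (Finset.mem_filter.1 hk).2 ht
      · intro hk
        rcases Finset.mem_sdiff.1 hk with ⟨hk1, hk2⟩
        rcases hsuppmem k hk1 with h | h
        · exact absurd (Finset.mem_filter.2 ⟨hk1, h⟩) hk2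
        · exact h
  refine ⟨S, hSsub, hTeq, ?_⟩
  intro τ hτ
  have hν : (τ.image Sum.inl ∪ (σ \ τ).image Sum.inr : Finset (Fin n ⊕ Fin n))
      ∈ polarOn σ {τ' | τ' ⊆ σ} := ⟨τ, hτ, le_refl _⟩
  rw [← hlink] at hν
  rcases hν with ⟨_, _, c, hcC, hc⟩
  rw [hTeq] at hc
  -- show c = τ ∪ S
  have : c = τ ∪ S := by
    ext k
    constructor
    · intro hk
      by_contra hknot
      rw [Finset.mem_union] at hknot
      push_neg at hknot
      obtain ⟨hkτ, hkS⟩ := hknot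
      by_cases hkσ : k ∈ σ
      · have : Sum.inr k ∈ (τ.image Sum.inl ∪ (σ \ τ).image Sum.inr : Finset (Fin n ⊕ Fin n))
            ∪ chamberSet σ S :=
          Finset.mem_union_left _ (Finset.mem_union_right _
            (Finset.mem_image_of_mem _ (Finset.mem_sdiff.2 ⟨hkσ, hkτ⟩)))
        exact mem_polarFace_inr.1 (hc this) hk
      · have : Sum.inr k ∈ (τ.image Sum.inl ∪ (σ \ τ).image Sum.inr : Finset (Fin n ⊕ Fin n))
            ∪ chamberSet σ S :=
          Finset.mem_union_right _ (mem_chamberSet_inr.2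
            (Finset.mem_sdiff.2 ⟨Finset.mem_compl.2 hkσ, hkS⟩))
        exact mem_polarFace_inr.1 (hc this) hk
    · intro hk
      rcases Finset.mem_union.1 hk with hk | hk
      · have : Sum.inl k ∈ (τ.image Sum.inl ∪ (σ \ τ).image Sum.inr : Finset (Fin n ⊕ Fin n))
            ∪ chamberSet σ S :=
          Finset.mem_union_left _ (Finset.mem_union_left _ (Finset.mem_image_of_mem _ hk))
        exact mem_polarFace_inl.1 (hc this)
      · have : Sum.inl k ∈ (τ.image Sum.inl ∪ (σ \ τ).image Sum.inr : Finset (Fin n ⊕ Fin n))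
            ∪ chamberSet σ S :=
          Finset.mem_union_right _ (mem_chamberSet_inl.2 hk)
        exact mem_polarFace_inl.1 (hc this)
  rwa [← this]

lemma mem_cham_of {C : Set (Finset (Fin n))} {σ S : Finset (Fin n)} (hS : S ⊆ σᶜ)
    (hA : ∀ τ ⊆ σ, τ ∪ S ∈ C) : σ ∈ cham C := by
  refine ⟨chamberSet σ S, ⟨σ ∪ S, hA σ le_rfl, chamberSet_subset_polarFace hS le_rfl⟩,
    suppF_chamberSet hS, link_chamberSet hS hA⟩

end UC
namespace UC
variable {n d : ℕ}

local notation "E" => EuclideanSpace ℝ (Fin d)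

lemma exists_dual {w : Fin n → E} {F : Finset (Fin n)}
    (hli : LinearIndependent ℝ (fun i : F => w i.1)) (r : Fin n → ℝ) :
    ∃ v : E, ∀ i ∈ F, ⟪w i, v⟫ = r i := by
  classical
  set ws : F → E := fun i => w i.1 with hws
  set K : Submodule ℝ E := Submodule.span ℝ (Set.range ws) with hK
  have : FiniteDimensional ℝ K := by
    apply FiniteDimensional.span_of_finite
    exact Set.finite_range ws
  set b : Module.Basis F ℝ K := Module.Basis.span hli with hb
  set f : K →ₗ[ℝ] ℝ := b.constr ℝ (fun i => r i.1) with hf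
  set g : E →ₗ[ℝ] ℝ := f.comp ((K.orthogonalProjectionOnto : E →L[ℝ] K) : E →ₗ[ℝ] K) with hg
  set G : E →L[ℝ] ℝ := LinearMap.toContinuousLinearMap g with hG
  refine ⟨(InnerProductSpace.toDual ℝ E).symm G, ?_⟩
  intro i hi
  have hmem : w i ∈ K := Submodule.subset_span ⟨⟨i, hi⟩, rfl⟩
  have h1 : ⟪w i, (InnerProductSpace.toDual ℝ E).symm G⟫
      = G (w i) := by
    rw [real_inner_comm]
    exact InnerProductSpace.toDual_symm_apply
  rw [h1]
  have h2 : (K.orthogonalProjectionOnto (w i) : K) = ⟨w i, hmem⟩ :=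
    Submodule.orthogonalProjectionOnto_mem_subspace_eq_self ⟨w i, hmem⟩
  have h3 : (⟨w i, hmem⟩ : K) = b ⟨i, hi⟩ := by
    apply Subtype.ext
    rw [hb, Module.Basis.span_apply]
  have : G (w i) = f (K.orthogonalProjectionOnto (w i)) := rfl
  rw [this, h2, h3, hf, Module.Basis.constr_basis]

end UC
namespace UC
variable {n d : ℕ}

local notation "E" => EuclideanSpace ℝ (Fin d)

lemma perturb {w : Fin n → E} {h : Fin n → ℝ} {X : Set E}
    (hst : StableArr w h X) {x : E} (hx : x ∈ X) (c : Finset (Fin n))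
    (hpat : ∀ i, ⟪w i, x⟫ ≠ h i → (i ∈ c ↔ h i < ⟪w i, x⟫)) :
    ∃ y ∈ X, (∀ i, (i ∈ c ↔ h i < ⟪w i, y⟫)) ∧ ∀ i, ⟪w i, y⟫ ≠ h i := by
  classical
  obtain ⟨hXo, hXc, hw0, hli⟩ := hst
  set F : Finset (Fin n) := {i | ⟪w i, x⟫ = h i} with hF
  have hmemF : ∀ i, i ∈ F ↔ ⟪w i, x⟫ = h i := by
    intro i; simp [hF]
  have hxF : x ∈ X ∩ ⋂ i ∈ F, {x | ⟪w i, x⟫ = h i} := by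
    refine ⟨hx, Set.mem_iInter₂.2 fun i hi => (hmemF i).1 hi⟩
  obtain ⟨v, hv⟩ := exists_dual (hli F ⟨x, hxF⟩)
    (fun i => if i ∈ c then 1 else -1)
  -- eventually conditions
  have hev : ∀ᶠ t in nhds (0:ℝ), (x + t • v ∈ X) ∧
      ∀ i ∈ Fᶜ, ((h i < ⟪w i, x + t • v⟫ ↔ h i < ⟪w i, x⟫) ∧ ⟪w i, x + t • v⟫ ≠ h i) := by
    have hcont : ∀ i : Fin n, Filter.Tendsto (fun t : ℝ => ⟪w i, x + t • v⟫)
        (nhds 0) (nhds ⟪w i, x⟫) := by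
      intro i
      have : Continuous fun t : ℝ => ⟪w i, x + t • v⟫ := by
        apply Continuous.inner continuous_const
        exact continuous_const.add (continuous_id.smul continuous_const)
      have h0 : ⟪w i, x + (0:ℝ) • v⟫ = ⟪w i, x⟫ := by simp
      simpa [h0] using this.tendsto 0
    apply Filter.Eventually.and
    · have : Filter.Tendsto (fun t : ℝ => x + t • v) (nhds 0) (nhds x) := by
        have : Continuous fun t : ℝ => x + t • v :=
          continuous_const.add (continuous_id.smul continuous_const)
        simpa using this.tendsto 0
      exact this.eventually (hXo.eventually_mem hx)
    · rw [Filter.eventually_all_finset]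
      intro i hi
      have hne : ⟪w i, x⟫ ≠ h i := fun hEq => by
        simp only [Finset.mem_compl, hmemF] at hi; exact hi hEq
      rcases lt_or_gt_of_ne hne with hlt | hgt
      · have h1 := (hcont i).eventually_lt_const hlt
        filter_upwards [h1] with t ht
        exact ⟨⟨fun h' => absurd ht (not_lt.2 h'.le), fun h' => absurd hlt (not_lt.2 h'.le)⟩, ne_of_lt ht⟩
      · have h1 := (hcont i).eventually_const_lt hgt
        filter_upwards [h1] with t ht
        exact ⟨⟨fun _ => hgt, fun _ => ht⟩, ne_of_gt ht⟩
  have hev2 := hev.filter_mono (nhdsWithin_le_nhds (s := Set.Ioi (0:ℝ)))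
  obtain ⟨t, ⟨hXt, hFc⟩, htpos⟩ := (hev2.and eventually_mem_nhdsWithin).exists
  have htpos' : (0:ℝ) < t := htpos
  have hinner : ∀ i ∈ F, ⟪w i, x + t • v⟫ = h i + t * (if i ∈ c then 1 else -1) := by
    intro i hiF
    rw [inner_add_right, real_inner_smul_right, hv i hiF, (hmemF i).1 hiF]
  refine ⟨x + t • v, hXt, ?_, ?_⟩
  · intro i
    by_cases hiF : i ∈ F
    · by_cases hic : i ∈ c
      · refine iff_of_true hic ?_
        rw [hinner i hiF, if_pos hic, mul_one]; linarith
      · refine iff_of_false hic (not_lt.2 ?_)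
        rw [hinner i hiF, if_neg hic]; linarith
    · rw [(hFc i (Finset.mem_compl.2 hiF)).1]
      exact hpat i (fun hEq => hiF ((hmemF i).2 hEq))
  · intro i
    by_cases hiF : i ∈ F
    · rw [hinner i hiF]
      by_cases hic : i ∈ c
      · rw [if_pos hic, mul_one]; intro hEq; linarith
      · rw [if_neg hic]; intro hEq
        rw [mul_neg_one] at hEq; linarith
    · exact (hFc i (Finset.mem_compl.2 hiF)).2

end UC
namespace UC
variable {n d : ℕ}

local notation "E" => EuclideanSpace ℝ (Fin d)

lemma exists_center {w : Fin n → E} {h : Fin n → ℝ} {X : Set E}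
    (hst : StableArr w h X) {σ S : Finset (Fin n)} (hS : S ⊆ σᶜ)
    (hA : ∀ τ ⊆ σ, τ ∪ S ∈ hcode w h X) :
    ∃ z ∈ X, (∀ i ∈ σ, ⟪w i, z⟫ = h i) ∧ (∀ i ∈ S, h i < ⟪w i, z⟫) ∧
      (∀ i, i ∉ σ → i ∉ S → ⟪w i, z⟫ < h i) := by
  classical
  obtain ⟨hXo, hXc, hw0, hli⟩ := hst
  -- strict points in every atom τ ∪ S
  have hpts : ∀ τ : Finset (Fin n), ∃ y, τ ⊆ σ →
      (y ∈ X ∧ (∀ i, i ∈ τ ∪ S ↔ h i < ⟪w i, y⟫) ∧ ∀ i, ⟪w i, y⟫ ≠ h i) := by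
    intro τ
    by_cases hτ : τ ⊆ σ
    · obtain ⟨x₀, hx₀X, hx₀pat⟩ := hA τ hτ
      obtain ⟨y, hyX, hypat, hyne⟩ :=
        perturb ⟨hXo, hXc, hw0, hli⟩ hx₀X (τ ∪ S) (fun i _ => hx₀pat i)
      exact ⟨y, fun _ => ⟨hyX, hypat, hyne⟩⟩
    · exact ⟨0, fun hc => absurd hc hτ⟩
  choose pt hpt using hpts
  set φ : E → (↥σ → ℝ) := fun y i => ⟪w i.1, y⟫ - h i.1 with hφ
  set P : Set E := pt '' ↑σ.powerset with hP
  set Q : Set (↥σ → ℝ) := φ '' P with hQ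
  have hQfin : Q.Finite := ((σ.powerset.finite_toSet).image pt).image φ
  have hptτ : ∀ τ ⊆ σ, pt τ ∈ X ∧ (∀ i, i ∈ τ ∪ S ↔ h i < ⟪w i, pt τ⟫) ∧
      ∀ i, ⟪w i, pt τ⟫ ≠ h i := fun τ hτ => hpt τ hτ
  -- 0 is in the convex hull of Q
  have h0Q : (0 : ↥σ → ℝ) ∈ convexHull ℝ Q := by
    by_contra h0
    obtain ⟨f, u, hf0, hfQ⟩ := geometric_hahn_banach_point_closed
      (convex_convexHull ℝ Q) (hQfin.isCompact_convexHull ℝ).isClosed h0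
    have hu : (0:ℝ) < u := by simpa using hf0
    set lam : Fin n → ℝ := fun i =>
      if hi : i ∈ σ then f (fun j => if (⟨i, hi⟩ : ↥σ) = j then (1:ℝ) else 0) else 0
      with hlam
    set τs : Finset (Fin n) := σ.filter (fun i => lam i < 0) with hτs
    have hτsσ : τs ⊆ σ := Finset.filter_subset _ _
    set q : ↥σ → ℝ := φ (pt τs) with hq
    have hqQ : q ∈ convexHull ℝ Q :=
      subset_convexHull ℝ Q ⟨pt τs, ⟨τs, by simpa using hτsσ, rfl⟩, rfl⟩
    have hfq : u < f q := hfQ q hqQ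
    have hsum : f q = ∑ i : ↥σ, q i * lam i.1 := by
      conv_lhs => rw [pi_eq_sum_univ q, map_sum]
      apply Finset.sum_congr rfl
      intro i _
      rw [map_smul]
      have hlameq : lam i.1 = f (fun j => if i = j then (1:ℝ) else 0) := by
        rw [hlam]
        simp only [dif_pos i.2, Subtype.coe_eta]
      rw [hlameq, smul_eq_mul]
    have hterm : ∀ i : ↥σ, q i * lam i.1 ≤ 0 := by
      intro i
      have hpat := (hptτ τs hτsσ).2.1 i.1
      have hne := (hptτ τs hτsσ).2.2 i.1
      by_cases hiτ : i.1 ∈ τs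
      · have hlamneg : lam i.1 < 0 := (Finset.mem_filter.1 hiτ).2
        have hqpos : 0 < q i := by
          have := hpat.1 (Finset.mem_union_left _ hiτ)
          simp only [hq, hφ]
          linarith
        nlinarith
      · have hlamnn : 0 ≤ lam i.1 := by
          by_contra hc
          exact hiτ (Finset.mem_filter.2 ⟨i.2, by linarith⟩)
        have hqneg : q i < 0 := by
          have hnotin : i.1 ∉ τs ∪ S := by
            intro hc
            rcases Finset.mem_union.1 hc with hc | hc
            · exact hiτ hc
            · exact Finset.mem_compl.1 (hS hc) i.2
          have h1 : ¬ (h i.1 < ⟪w i.1, pt τs⟫) := fun hc => hnotin (hpat.2 hc)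
          have h2 := lt_of_le_of_ne (not_lt.1 h1) hne
          simp only [hq, hφ]
          linarith
        nlinarith
    have : f q ≤ 0 := by
      rw [hsum]
      exact Finset.sum_nonpos fun i _ => hterm i
    linarith
  -- pull back through the affine map
  set L : E →ₗ[ℝ] (↥σ → ℝ) :=
    LinearMap.pi (fun i : ↥σ => ((innerSL ℝ (w i.1)).toLinearMap)) with hL
  have hφaff : ∀ p' : E, φ p' = L p' + φ 0 := by
    intro p'
    funext i
    simp only [hφ, hL, LinearMap.pi_apply, ContinuousLinearMap.coe_coe, innerSL_apply_apply,
      inner_zero_right, Pi.add_apply]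
    ring
  set A : E →ᵃ[ℝ] (↥σ → ℝ) := AffineMap.mk' φ L 0 (by
    intro p'
    simp only [vsub_eq_sub, sub_zero, vadd_eq_add]
    exact hφaff p') with hA
  have himg : φ '' (convexHull ℝ P) = convexHull ℝ Q := by
    have := AffineMap.image_convexHull (f := A) (s := P)
    simpa [hA, hQ] using this
  have h0mem : (0 : ↥σ → ℝ) ∈ φ '' (convexHull ℝ P) := by rw [himg]; exact h0Q
  obtain ⟨z, hzP, hz0⟩ := h0mem
  have hPX : P ⊆ X := by
    rintro _ ⟨τ, hτ, rfl⟩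
    exact (hptτ τ (by simpa using hτ)).1
  refine ⟨z, convexHull_min hPX hXc hzP, ?_, ?_, ?_⟩
  · intro i hi
    have := congrFun hz0 ⟨i, hi⟩
    simp only [hφ, Pi.zero_apply] at this
    linarith
  · intro i hi
    have hsub : P ⊆ {y : E | h i < ⟪w i, y⟫} := by
      rintro _ ⟨τ, hτ, rfl⟩
      exact ((hptτ τ (by simpa using hτ)).2.1 i).1 (Finset.mem_union_right _ hi)
    have hconv : Convex ℝ {y : E | h i < ⟪w i, y⟫} :=
      convex_halfSpace_gt ⟨fun a b => inner_add_right _ _ _,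
        fun c a => real_inner_smul_right _ _ _⟩ (h i)
    exact convexHull_min hsub hconv hzP
  · intro i hiσ hiS
    have hsub : P ⊆ {y : E | ⟪w i, y⟫ < h i} := by
      rintro _ ⟨τ, hτ, rfl⟩
      have hτσ : τ ⊆ σ := by simpa using hτ
      have hnotin : i ∉ τ ∪ S := by
        intro hc
        rcases Finset.mem_union.1 hc with hc | hc
        · exact hiσ (hτσ hc)
        · exact hiS hc
      have h1 : ¬ (h i < ⟪w i, pt τ⟫) := fun hc => hnotin (((hptτ τ hτσ).2.1 i).2 hc)
      exact lt_of_le_of_ne (not_lt.1 h1) ((hptτ τ hτσ).2.2 i)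
    have hconv : Convex ℝ {y : E | ⟪w i, y⟫ < h i} :=
      convex_halfSpace_lt ⟨fun a b => inner_add_right _ _ _,
        fun c a => real_inner_smul_right _ _ _⟩ (h i)
    exact convexHull_min hsub hconv hzP

end UC
namespace UC
variable {n d : ℕ}

local notation "E" => EuclideanSpace ℝ (Fin d)

lemma exists_bigger {w : Fin n → E} {h : Fin n → ℝ} {X : Set E}
    (hst : StableArr w h X) {σ S S' : Finset (Fin n)} (hS : S ⊆ σᶜ) (hS' : S' ⊆ σᶜ)
    (hA : ∀ τ ⊆ σ, τ ∪ S ∈ hcode w h X) (hA' : ∀ τ ⊆ σ, τ ∪ S' ∈ hcode w h X)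
    (hne : S ≠ S') :
    ∃ j, j ∉ σ ∧ (σ ∪ {j}) ∈ cham (hcode w h X) := by
  classical
  obtain ⟨z, hzX, hzσ, hzS, hzneg⟩ := exists_center hst hS hA
  obtain ⟨z', hz'X, hz'σ, hz'S, hz'neg⟩ := exists_center hst hS' hA'
  -- pick an index where the patterns differ
  have hD : ((S \ S') ∪ (S' \ S)).Nonempty := by
    rcases Finset.eq_empty_or_nonempty ((S \ S') ∪ (S' \ S)) with he | hn
    · exfalso
      apply hne
      rw [Finset.union_eq_empty] at he
      exact Finset.Subset.antisymm (Finset.sdiff_eq_empty_iff_subset.1 he.1)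
        (Finset.sdiff_eq_empty_iff_subset.1 he.2)
    · exact hn
  obtain ⟨j, hjD⟩ := hD
  set a : ℝ := ⟪w j, z⟫ - h j with ha
  set b : ℝ := ⟪w j, z'⟫ - h j with hb
  have hjσ : j ∉ σ := by
    rcases Finset.mem_union.1 hjD with hj | hj
    · exact Finset.mem_compl.1 (hS (Finset.mem_sdiff.1 hj).1)
    · exact Finset.mem_compl.1 (hS' (Finset.mem_sdiff.1 hj).1)
  have hsigns : (0 < a ∧ b < 0) ∨ (a < 0 ∧ 0 < b) := by
    rcases Finset.mem_union.1 hjD with hj | hj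
    · rcases Finset.mem_sdiff.1 hj with ⟨hj1, hj2⟩
      left
      constructor
      · have := hzS j hj1; linarith
      · have := hz'neg j hjσ hj2; linarith
    · rcases Finset.mem_sdiff.1 hj with ⟨hj1, hj2⟩
      right
      constructor
      · have := hzneg j hjσ hj2; linarith
      · have := hz'S j hj1; linarith
  have hab : a - b ≠ 0 := by rcases hsigns with ⟨h1, h2⟩ | ⟨h1, h2⟩ <;> intro hc <;> linarith
  set t0 : ℝ := a / (a - b) with ht0
  have ht0pos : 0 < t0 := by
    rcases hsigns with ⟨h1, h2⟩ | ⟨h1, h2⟩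
    · exact div_pos h1 (by linarith)
    · exact div_pos_of_neg_of_neg h1 (by linarith)
  have ht0lt : t0 < 1 := by
    rcases hsigns with ⟨h1, h2⟩ | ⟨h1, h2⟩
    · rw [ht0, div_lt_one (by linarith)]; linarith
    · rw [ht0, ← neg_div_neg_eq, div_lt_one (by linarith)]; linarith
  set z0 : E := z + t0 • (z' - z) with hz0
  have hinner0 : ∀ i, ⟪w i, z0⟫ = ⟪w i, z⟫ + t0 * (⟪w i, z'⟫ - ⟪w i, z⟫) := by
    intro i
    rw [hz0, inner_add_right, real_inner_smul_right, inner_sub_right]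
  have hz0X : z0 ∈ X := by
    have := hst.2.1 hzX hz'X (by linarith : (0:ℝ) ≤ 1 - t0) ht0pos.le (by ring)
    have heq : (1 - t0) • z + t0 • z' = z0 := by
      rw [hz0]; module
    rwa [heq] at this
  have hz0σ : ∀ i ∈ σ, ⟪w i, z0⟫ = h i := by
    intro i hi
    rw [hinner0 i, hzσ i hi, hz'σ i hi]
    ring
  have hz0j : ⟪w j, z0⟫ = h j := by
    rw [hinner0 j]
    have : ⟪w j, z⟫ = h j + a := by rw [ha]; ring
    have hb' : ⟪w j, z'⟫ = h j + b := by rw [hb]; ring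
    rw [this, hb', ht0]
    field_simp
    ring
  set B : Finset (Fin n) := Finset.univ.filter (fun i => h i < ⟪w i, z0⟫) with hB
  have hBc : B ⊆ (σ ∪ {j})ᶜ := by
    intro i hi
    have hilt : h i < ⟪w i, z0⟫ := (Finset.mem_filter.1 hi).2
    rw [Finset.mem_compl, Finset.mem_union, Finset.mem_singleton]
    rintro (hiσ | rfl)
    · rw [hz0σ i hiσ] at hilt; exact lt_irrefl _ hilt
    · rw [hz0j] at hilt; exact lt_irrefl _ hilt
  refine ⟨j, hjσ, mem_cham_of hBc ?_⟩
  intro τ hτ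
  have hpat0 : ∀ i, ⟪w i, z0⟫ ≠ h i → (i ∈ τ ∪ B ↔ h i < ⟪w i, z0⟫) := by
    intro i hine
    have hiσ : i ∉ σ := fun hc => hine (hz0σ i hc)
    have hij : i ≠ j := fun hc => hine (hc ▸ hz0j)
    have hiτ : i ∉ τ := fun hc => by
      rcases Finset.mem_union.1 (hτ hc) with hc' | hc'
      · exact hiσ hc'
      · exact hij (Finset.mem_singleton.1 hc')
    constructor
    · intro hc
      rcases Finset.mem_union.1 hc with hc | hc
      · exact absurd hc hiτ
      · exact (Finset.mem_filter.1 hc).2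
    · intro hlt
      exact Finset.mem_union_right _ (Finset.mem_filter.2 ⟨Finset.mem_univ _, hlt⟩)
  obtain ⟨y, hyX, hypat, _⟩ := perturb hst hz0X (τ ∪ B) hpat0
  exact ⟨y, hyX, hypat⟩

end UC
/-- Single chamber property: if `C` is a stable hyperplane code, then every maximal
face `σ` of the combinatorial chamber complex `cham(C)` has a unique chamber, i.e.
a unique face `T ∈ Γ(C)` with `supp T = [n] \ σ` and `link_T Γ(C) = Γ(2^σ)`. -/
theorem unique_chamber_of_stable {n d : ℕ} (w : Fin n → EuclideanSpace ℝ (Fin d))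
    (h : Fin n → ℝ) (X : Set (EuclideanSpace ℝ (Fin d)))
    (hst : StableArr w h X) (C : Set (Finset (Fin n))) (hC : C = hcode w h X)
    (σ : Finset (Fin n)) (hσ : σ ∈ cham C)
    (hmax : ∀ σ' ∈ cham C, σ ⊆ σ' → σ' = σ) :
    ∃! T : Finset (Fin n ⊕ Fin n),
      T ∈ polar C ∧ suppF T = σᶜ ∧
        link (polar C) T = polarOn σ {τ | τ ⊆ σ} := by
  subst hC
  obtain ⟨T₀, hT₀p, hT₀s, hT₀l⟩ := hσ
  refine ⟨T₀, ⟨hT₀p, hT₀s, hT₀l⟩, ?_⟩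
  rintro T ⟨hTp, hTs, hTl⟩
  obtain ⟨S, hSsub, hTeq, hSA⟩ := UC.exists_chamberSet hTp hTs hTl
  obtain ⟨S', hS'sub, hT₀eq, hS'A⟩ := UC.exists_chamberSet hT₀p hT₀s hT₀l
  by_cases hSS : S = S'
  · rw [hTeq, hT₀eq, hSS]
  · exfalso
    obtain ⟨j, hjσ, hjcham⟩ := UC.exists_bigger hst hSsub hS'sub hSA hS'A hSS
    have hσj := hmax _ hjcham Finset.subset_union_left
    apply hjσ
    rw [← hσj]
    exact Finset.mem_union_right _ (Finset.mem_singleton_self j)
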